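/- Variance bound (Lemma 2): In the Poissonized multi-population model, if t_1 = max_j t_j ≥ 1, then the weighted estimator Û^W with Poisson rate r > 0 satisfies Var(Û^W − U) ≤ (∑_{j=1}^m n_j) · e^{2r(t_1 − 1)} + ∑_{j=1}^m n_j t_j. -/

import Mathlib

open MeasureTheory ProbabilityTheory Real Finset
open scoped NNReal

noncomputable section

/-- Index type for the Poisson counts: `Sum.inl (x, j)` indexes the period-one count
`N_{x,j}`, and `Sum.inr (x, j)` indexes the period-two count `N'_{x,j}`. -/
abbrev Idx (X : Type*) (m : ℕ) := (X × Fin m) ⊕ (X × Fin m)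

/-- Joint law of the mutually independent Poisson counts: `N_{x,j} ~ Poisson(λ_{x,j})`
and `N'_{x,j} ~ Poisson(t_j · λ_{x,j})`, where `λ_{x,j} = lam x j`. -/
noncomputable def jointLaw (X : Type*) [Fintype X] (m : ℕ) (lam : X → Fin m → ℝ≥0)
    (t : Fin m → ℝ≥0) : Measure (Idx X m → ℕ) :=
  Measure.pi fun idx =>
    poissonMeasure (Sum.elim (fun q => lam q.1 q.2) (fun q => t q.2 * lam q.1 q.2) idx)

/-- The number of new elements `U`: elements unseen in period one and seen in period two. -/
def numNew {X : Type*} {m : ℕ} (ω : Idx X m → ℕ) : ℝ :=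
  (Set.ncard {x : X | (∀ j, ω (Sum.inl (x, j)) = 0) ∧ (∃ j, ω (Sum.inr (x, j)) ≠ 0)} : ℝ)

/-- Fingerprint entry `φ_{i_1,...,i_m}`: the number of domain elements observed exactly
`i j` times in population `j` during period one. -/
def fingerprint {X : Type*} {m : ℕ} (ω : Idx X m → ℕ) (i : Fin m → ℕ) : ℝ :=
  (Set.ncard {x : X | ∀ j, ω (Sum.inl (x, j)) = i j} : ℝ)

/-- The Poisson tail weight `W(i_1,...,i_m) = P(L ≥ ∑_{j ∈ A} i_j)` where `L ~ Poisson(r)`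
and `A = {j : t_j > 1}`. -/
noncomputable def Wpoi {m : ℕ} (r : ℝ) (t : Fin m → ℝ≥0) (i : Fin m → ℕ) : ℝ :=
  (poissonMeasure r.toNNReal
    {k : ℕ | ∑ j ∈ Finset.univ.filter (fun j => 1 < t j), i j ≤ k}).toReal

/-- The weighted linear estimator `Û^W`. -/
noncomputable def UhatW {X : Type*} {m : ℕ} (r : ℝ) (t : Fin m → ℝ≥0)
    (ω : Idx X m → ℕ) : ℝ :=
  -∑' i : {i : Fin m → ℕ // i ≠ 0},
    (∏ j, (-(t j : ℝ)) ^ (i.1 j)) * Wpoi r t i.1 * fingerprint ω i.1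

/-! ### Auxiliary lemmas -/

lemma poissonPMF_apply' (r : ℝ≥0) (k : ℕ) :
    poissonPMF r k = ENNReal.ofReal (poissonPMFReal r k) := rfl

lemma poissonMeasure_eq_toMeasure (r : ℝ≥0) : poissonMeasure r = (poissonPMF r).toMeasure := by
  ext s hs
  rw [poissonMeasure, Measure.sum_apply _ hs, PMF.toMeasure_apply _ hs]
  congr 1; ext n
  by_cases hn : n ∈ s <;> simp [hn, poissonPMF_apply', poissonPMFReal]

lemma poissonMeasure_toReal (r : ℝ≥0) (s : Set ℕ) :
    (poissonMeasure r s).toReal = ∑' k, s.indicator (poissonPMFReal r) k := by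
  rw [poissonMeasure_eq_toMeasure, PMF.toMeasure_apply _ (MeasurableSet.of_discrete (s := s)),
    ENNReal.tsum_toReal_eq]
  · congr 1; ext k
    by_cases hk : k ∈ s
    · simp [hk, poissonPMF_apply', ENNReal.toReal_ofReal poissonPMFReal_nonneg]
    · simp [hk]
  · intro k
    by_cases hk : k ∈ s
    · simp [hk, poissonPMF_apply']
    · simp [hk]

lemma poisson_tail_bound (r : ℝ) (hr : 0 ≤ r) (c : ℝ) (hc : 1 ≤ c) (S : ℕ) :
    c ^ S * (poissonMeasure r.toNNReal {k : ℕ | S ≤ k}).toReal ≤ Real.exp (r * (c - 1)) := by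
  have hc0 : 0 ≤ c := le_trans zero_le_one hc
  have hrr : ((r.toNNReal : ℝ)) = r := Real.coe_toNNReal r hr
  have hH : HasSum (fun k => Real.exp (-r) * (r*c)^k / Nat.factorial k)
      (Real.exp (r * (c-1))) := by
    have h1 : HasSum (fun k => (r*c)^k / Nat.factorial k) (Real.exp (r*c)) := by
      rw [Real.exp_eq_exp_ℝ]
      exact NormedSpace.expSeries_div_hasSum_exp (r*c)
    have h2 := h1.mul_left (Real.exp (-r))
    have he : Real.exp (-r) * Real.exp (r*c) = Real.exp (r * (c-1)) := by
      rw [← Real.exp_add]; ring_nf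
    rw [he] at h2
    simp_rw [mul_div_assoc]
    exact h2
  rw [poissonMeasure_toReal, ← tsum_mul_left]
  have hle : ∀ k, c ^ S * ({k : ℕ | S ≤ k}.indicator (poissonPMFReal r.toNNReal) k)
      ≤ Real.exp (-r) * (r*c)^k / Nat.factorial k := by
    intro k
    by_cases hk : S ≤ k
    · rw [Set.indicator_of_mem (show k ∈ {k : ℕ | S ≤ k} from hk), poissonPMFReal, hrr]
      have h1 : c ^ S ≤ c ^ k := pow_le_pow_right₀ hc hk
      have h2 : (0:ℝ) ≤ Real.exp (-r) * r ^ k / Nat.factorial k := by positivity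
      calc c ^ S * (Real.exp (-r) * r ^ k / Nat.factorial k)
          ≤ c ^ k * (Real.exp (-r) * r ^ k / Nat.factorial k) :=
            mul_le_mul_of_nonneg_right h1 h2
        _ = Real.exp (-r) * (r*c)^k / Nat.factorial k := by rw [mul_pow]; ring
    · rw [Set.indicator_of_notMem (show k ∉ {k : ℕ | S ≤ k} from hk), mul_zero]
      positivity
  refine le_of_le_of_eq (Summable.tsum_le_tsum hle ?_ hH.summable) hH.tsum_eq
  refine Summable.of_nonneg_of_le (fun k => ?_) hle hH.summable
  exact mul_nonneg (by positivity) (Set.indicator_nonneg (fun _ _ => poissonPMFReal_nonneg) k)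

lemma poisson_compl_zero_le (l : ℝ≥0) :
    (poissonMeasure l {k : ℕ | k ≠ 0}).toReal ≤ (l : ℝ) := by
  have hs : ({k : ℕ | k ≠ 0} : Set ℕ) = ({0} : Set ℕ)ᶜ := by ext k; simp
  have h0 : poissonMeasure l {0} = ENNReal.ofReal (Real.exp (-(l:ℝ))) := by
    rw [poissonMeasure_eq_toMeasure, PMF.toMeasure_apply_singleton _ _ (measurableSet_singleton 0),
      poissonPMF_apply', poissonPMFReal]
    norm_num
  have h1 : poissonMeasure l ({0} : Set ℕ)ᶜ = 1 - poissonMeasure l {0} :=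
    prob_compl_eq_one_sub (measurableSet_singleton 0)
  rw [hs, h1, h0, ENNReal.toReal_sub_of_le ?h1 (by simp)]
  · rw [ENNReal.toReal_one, ENNReal.toReal_ofReal (Real.exp_nonneg _)]
    have := Real.add_one_le_exp (-(l:ℝ))
    linarith
  · rw [← ENNReal.ofReal_one]
    exact ENNReal.ofReal_le_ofReal (Real.exp_le_one_iff.mpr (neg_nonpos.mpr l.coe_nonneg))

lemma indepFun_fst_snd' {α β : Type*} [MeasurableSpace α] [MeasurableSpace β]
    (μ : Measure α) (ν : Measure β) [IsProbabilityMeasure μ] [SigmaFinite ν]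
    [IsProbabilityMeasure ν] :
    IndepFun (Prod.fst : α × β → α) (Prod.snd : α × β → β) (μ.prod ν) := by
  rw [indepFun_iff_measure_inter_preimage_eq_mul]
  intro s t hs ht
  rw [← Set.prod_eq, Measure.prod_prod, ← Set.prod_univ, ← Set.univ_prod,
    Measure.prod_prod, Measure.prod_prod]
  simp [mul_comm]

lemma IndepFun.comp_measurePreserving' {Ω Ω' : Type*} [MeasurableSpace Ω] [MeasurableSpace Ω']
    {μ : Measure Ω} {ν : Measure Ω'} {h : Ω → Ω'} (hmp : MeasurePreserving h μ ν)
    {β γ : Type*} [MeasurableSpace β] [MeasurableSpace γ] {f : Ω' → β} {g : Ω' → γ}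
    (hf : Measurable f) (hg : Measurable g) (hind : IndepFun f g ν) :
    IndepFun (f ∘ h) (g ∘ h) μ := by
  rw [indepFun_iff_measure_inter_preimage_eq_mul] at hind ⊢
  intro s t hs ht
  have e1 : (f ∘ h) ⁻¹' s ∩ (g ∘ h) ⁻¹' t = h ⁻¹' (f ⁻¹' s ∩ g ⁻¹' t) := rfl
  rw [e1, hmp.measure_preimage ((hf hs).inter (hg ht)).nullMeasurableSet,
    show (f ∘ h) ⁻¹' s = h ⁻¹' (f ⁻¹' s) from rfl,
    show (g ∘ h) ⁻¹' t = h ⁻¹' (g ⁻¹' t) from rfl,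
    hmp.measure_preimage (hf hs).nullMeasurableSet,
    hmp.measure_preimage (hg ht).nullMeasurableSet]
  exact hind s t hs ht

section Aux

variable {X : Type*} [Fintype X] {m : ℕ}

instance jointLaw_prob (lam : X → Fin m → ℝ≥0) (t : Fin m → ℝ≥0) :
    IsProbabilityMeasure (jointLaw X m lam t) := by
  unfold jointLaw; infer_instance

lemma jointLaw_eval (lam : X → Fin m → ℝ≥0) (t : Fin m → ℝ≥0) (idx : Idx X m) (s : Set ℕ) :
    jointLaw X m lam t (Function.eval idx ⁻¹' s) =
      poissonMeasure (Sum.elim (fun q => lam q.1 q.2) (fun q => t q.2 * lam q.1 q.2) idx) s := by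
  classical
  rw [jointLaw, Set.eval_preimage, Measure.pi_pi]
  rw [Finset.prod_eq_single idx ?h1 (by simp)]
  · rw [Function.update_self]
  · intro j _ hj
    rw [Function.update_of_ne hj]
    exact measure_univ

lemma toReal_measure_iUnion_le {Ω : Type*} [MeasurableSpace Ω] (μ : Measure Ω)
    [IsProbabilityMeasure μ] {ι : Type*} [Fintype ι] (s : ι → Set Ω) :
    (μ (⋃ i, s i)).toReal ≤ ∑ i, (μ (s i)).toReal := by
  have h1 : μ (⋃ i, s i) ≤ ∑ i, μ (s i) := by
    refine le_trans (measure_iUnion_le s) ?_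
    rw [tsum_fintype]
  refine le_trans (ENNReal.toReal_mono ?_ h1) ?_
  · exact (ENNReal.sum_lt_top.mpr (fun i _ => measure_lt_top μ _)).ne
  · rw [ENNReal.toReal_sum (fun i _ => measure_ne_top μ _)]

lemma indep_blocks (lam : X → Fin m → ℝ≥0) (t : Fin m → ℝ≥0) {x y : X} (hxy : x ≠ y)
    (F G : (Fin m → ℕ) → (Fin m → ℕ) → ℝ) :
    IndepFun
      (fun ω : Idx X m → ℕ => F (fun j => ω (Sum.inl (x, j))) (fun j => ω (Sum.inr (x, j))))
      (fun ω : Idx X m → ℕ => G (fun j => ω (Sum.inl (y, j))) (fun j => ω (Sum.inr (y, j))))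
      (jointLaw X m lam t) := by
  classical
  set μs : Idx X m → Measure ℕ := fun idx =>
    poissonMeasure (Sum.elim (fun q => lam q.1 q.2) (fun q => t q.2 * lam q.1 q.2) idx) with hμs
  set p : Idx X m → Prop := fun idx => Sum.elim (fun q => q.1 = x) (fun q => q.1 = x) idx with hp
  have hmp := MeasureTheory.measurePreserving_piEquivPiSubtypeProd
    (α := fun _ : Idx X m => ℕ) (μ := μs) p
  let f₁ : (Subtype p → ℕ) → ℝ := fun v =>
    F (fun j => v ⟨Sum.inl (x, j), rfl⟩) (fun j => v ⟨Sum.inr (x, j), rfl⟩)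
  let f₂ : ({i // ¬ p i} → ℕ) → ℝ := fun v =>
    G (fun j => v ⟨Sum.inl (y, j), fun h => hxy (h.symm)⟩)
      (fun j => v ⟨Sum.inr (y, j), fun h => hxy (h.symm)⟩)
  have h1 : IndepFun (Prod.fst) (Prod.snd)
      ((Measure.pi fun i : Subtype p => μs i).prod (Measure.pi fun i : {i // ¬ p i} => μs i)) :=
    indepFun_fst_snd' _ _
  have h2 := h1.comp (measurable_of_countable f₁) (measurable_of_countable f₂)
  have h3 := IndepFun.comp_measurePreserving' hmp
    (measurable_of_countable _) (measurable_of_countable _) h2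
  exact h3

end Aux

/-- The per-element period-one contribution. -/
def Gfun {m : ℕ} (r : ℝ) (t : Fin m → ℝ≥0) (a : Fin m → ℕ) : ℝ :=
  if a = 0 then 0 else -((∏ j, (-(t j : ℝ)) ^ (a j)) * Wpoi r t a)

/-- The per-element contribution to `Û^W - U`. -/
def Hfun {m : ℕ} (r : ℝ) (t : Fin m → ℝ≥0) (a b : Fin m → ℕ) : ℝ :=
  Gfun r t a - (if a = 0 ∧ ¬ b = 0 then 1 else 0)

lemma Wpoi_nonneg {m : ℕ} (r : ℝ) (t : Fin m → ℝ≥0) (i : Fin m → ℕ) : 0 ≤ Wpoi r t i :=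
  ENNReal.toReal_nonneg

/-- Key scalar bound: `|∏_j (-t_j)^{i_j}| · W(i) ≤ exp (r (t_{j₁} - 1))`. -/
lemma key_scalar_bound {m : ℕ} (r : ℝ) (hr : 0 ≤ r) (t : Fin m → ℝ≥0)
    (j₁ : Fin m) (hmax : ∀ j, t j ≤ t j₁) (h1 : 1 ≤ t j₁) (a : Fin m → ℕ) :
    |(∏ j, (-(t j : ℝ)) ^ (a j))| * Wpoi r t a ≤ Real.exp (r * ((t j₁ : ℝ) - 1)) := by
  classical
  set c : ℝ := (t j₁ : ℝ) with hc
  have hc1 : 1 ≤ c := by exact_mod_cast h1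
  have habs : |(∏ j, (-(t j : ℝ)) ^ (a j))| = ∏ j, (t j : ℝ) ^ (a j) := by
    rw [Finset.abs_prod]
    congr 1; ext j
    rw [abs_pow, abs_neg, abs_of_nonneg (t j).coe_nonneg]
  set S : ℕ := ∑ j ∈ Finset.univ.filter (fun j => 1 < t j), a j with hS
  have hprod : (∏ j, (t j : ℝ) ^ (a j)) ≤ c ^ S := by
    rw [← Finset.prod_filter_mul_prod_filter_not Finset.univ (fun j => 1 < t j)]
    have h2 : (∏ j ∈ Finset.univ.filter (fun j => ¬ 1 < t j), (t j : ℝ) ^ (a j)) ≤ 1 := by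
      refine Finset.prod_le_one (fun j _ => by positivity) (fun j hj => ?_)
      refine pow_le_one₀ (t j).coe_nonneg ?_
      have := (Finset.mem_filter.mp hj).2
      exact_mod_cast (not_lt.mp this)
    have h3 : (∏ j ∈ Finset.univ.filter (fun j => 1 < t j), (t j : ℝ) ^ (a j)) ≤ c ^ S := by
      rw [hS, ← Finset.prod_pow_eq_pow_sum]
      refine Finset.prod_le_prod (fun j _ => by positivity) (fun j _ => ?_)
      refine pow_le_pow_left₀ (t j).coe_nonneg ?_ _
      exact_mod_cast hmax j
    calc (∏ j ∈ Finset.univ.filter (fun j => 1 < t j), (t j : ℝ) ^ (a j)) *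
          (∏ j ∈ Finset.univ.filter (fun j => ¬ 1 < t j), (t j : ℝ) ^ (a j))
        ≤ (∏ j ∈ Finset.univ.filter (fun j => 1 < t j), (t j : ℝ) ^ (a j)) * 1 := by
          refine mul_le_mul_of_nonneg_left h2 (Finset.prod_nonneg (fun j _ => by positivity))
      _ = _ := by rw [mul_one]
      _ ≤ c ^ S := h3
  calc |(∏ j, (-(t j : ℝ)) ^ (a j))| * Wpoi r t a
      = (∏ j, (t j : ℝ) ^ (a j)) * Wpoi r t a := by rw [habs]
    _ ≤ c ^ S * Wpoi r t a := mul_le_mul_of_nonneg_right hprod (Wpoi_nonneg r t a)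
    _ ≤ Real.exp (r * (c - 1)) := poisson_tail_bound r hr c hc1 S

lemma abs_Hfun_le {m : ℕ} (r : ℝ) (hr : 0 ≤ r) (t : Fin m → ℝ≥0)
    (j₁ : Fin m) (hmax : ∀ j, t j ≤ t j₁) (h1 : 1 ≤ t j₁) (a b : Fin m → ℕ) :
    |Hfun r t a b| ≤ Real.exp (r * ((t j₁ : ℝ) - 1)) + 1 := by
  have hG : |Gfun r t a| ≤ Real.exp (r * ((t j₁ : ℝ) - 1)) := by
    rw [Gfun]
    by_cases h : a = 0
    · rw [if_pos h, abs_zero]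
      exact Real.exp_nonneg _
    · rw [if_neg h, abs_neg, abs_mul, abs_of_nonneg (Wpoi_nonneg r t a)]
      exact key_scalar_bound r hr t j₁ hmax h1 a
  have hI : |(if a = 0 ∧ ¬ b = 0 then (1:ℝ) else 0)| ≤ 1 := by
    by_cases h : a = 0 ∧ ¬ b = 0 <;> simp [h]
  calc |Hfun r t a b| ≤ |Gfun r t a| + |(if a = 0 ∧ ¬ b = 0 then (1:ℝ) else 0)| :=
        abs_sub _ _
    _ ≤ _ := add_le_add hG hI

lemma Hfun_sq_le {m : ℕ} (r : ℝ) (hr : 0 ≤ r) (t : Fin m → ℝ≥0)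
    (j₁ : Fin m) (hmax : ∀ j, t j ≤ t j₁) (h1 : 1 ≤ t j₁) (a b : Fin m → ℕ) :
    (Hfun r t a b) ^ 2 ≤ Real.exp (2 * r * ((t j₁ : ℝ) - 1)) * (if a = 0 then 0 else 1)
      + (if b = 0 then 0 else 1) := by
  have hK : Real.exp (r * ((t j₁ : ℝ) - 1)) ^ 2 = Real.exp (2 * r * ((t j₁ : ℝ) - 1)) := by
    rw [sq, ← Real.exp_add]; ring_nf
  by_cases h : a = 0
  · rw [Hfun, Gfun, if_pos h, if_pos h, zero_sub]
    by_cases hb : b = 0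
    · simp [h, hb]
    · rw [if_neg hb, if_pos ⟨h, hb⟩]
      norm_num
  · rw [Hfun, if_neg (fun hab => h hab.1), sub_zero, if_neg h, mul_one]
    have h2 : |Gfun r t a| ≤ Real.exp (r * ((t j₁ : ℝ) - 1)) := by
      rw [Gfun, if_neg h, abs_neg, abs_mul, abs_of_nonneg (Wpoi_nonneg r t a)]
      exact key_scalar_bound r hr t j₁ hmax h1 a
    have h3 : (Gfun r t a) ^ 2 ≤ Real.exp (r * ((t j₁ : ℝ) - 1)) ^ 2 := by
      rw [← sq_abs]
      exact pow_le_pow_left₀ (abs_nonneg _) h2 2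
    rw [hK] at h3
    have h4 : (0:ℝ) ≤ if b = 0 then 0 else 1 := by positivity
    linarith

section Decomp

variable {X : Type*} [Fintype X] {m : ℕ}

lemma fingerprint_eq_sum (ω : Idx X m → ℕ) (i : Fin m → ℕ) :
    fingerprint ω i = ∑ x, (if (fun j => ω (Sum.inl (x, j))) = i then (1:ℝ) else 0) := by
  classical
  rw [fingerprint]
  have h : {x : X | ∀ j, ω (Sum.inl (x, j)) = i j} =
      ↑(Finset.univ.filter (fun x => (fun j => ω (Sum.inl (x, j))) = i)) := by
    ext x; simp [funext_iff]
  rw [h, Set.ncard_coe_finset, Finset.card_filter]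
  push_cast
  rfl

lemma numNew_eq_sum (ω : Idx X m → ℕ) :
    numNew ω = ∑ x, (if (fun j => ω (Sum.inl (x, j))) = 0 ∧ ¬ (fun j => ω (Sum.inr (x, j))) = 0
      then (1:ℝ) else 0) := by
  classical
  rw [numNew]
  have h : {x : X | (∀ j, ω (Sum.inl (x, j)) = 0) ∧ (∃ j, ω (Sum.inr (x, j)) ≠ 0)} =
      ↑(Finset.univ.filter (fun x => (fun j => ω (Sum.inl (x, j))) = 0 ∧
        ¬ (fun j => ω (Sum.inr (x, j))) = 0)) := by
    ext x
    simp [funext_iff, Function.ne_iff]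
  rw [h, Set.ncard_coe_finset, Finset.card_filter]
  push_cast
  rfl

lemma uhatW_eq_sum (r : ℝ) (t : Fin m → ℝ≥0) (ω : Idx X m → ℕ) :
    UhatW r t ω = ∑ x, Gfun r t (fun j => ω (Sum.inl (x, j))) := by
  classical
  set a : X → (Fin m → ℕ) := fun x j => ω (Sum.inl (x, j)) with ha
  set c : (Fin m → ℕ) → ℝ := fun i => (∏ j, (-(t j : ℝ)) ^ (i j)) * Wpoi r t i with hcdef
  have hsummand : ∀ i : {i : Fin m → ℕ // i ≠ 0},
      (∏ j, (-(t j : ℝ)) ^ (i.1 j)) * Wpoi r t i.1 * fingerprint ω i.1 =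
        ∑ x, c i.1 * (if a x = i.1 then (1:ℝ) else 0) := by
    intro i
    rw [fingerprint_eq_sum ω i.1, Finset.mul_sum]
  have hsummable : ∀ x : X, x ∈ Finset.univ → Summable
      (fun i : {i : Fin m → ℕ // i ≠ 0} => c i.1 * (if a x = i.1 then (1:ℝ) else 0)) := by
    intro x _
    by_cases h : a x = 0
    · have hz : (fun i : {i : Fin m → ℕ // i ≠ 0} => c i.1 * (if a x = i.1 then (1:ℝ) else 0)) =
          fun _ => 0 := by
        funext i
        rw [if_neg (fun hh : a x = i.1 => i.2 (hh ▸ h)), mul_zero]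
      rw [hz]
      exact summable_zero
    · refine summable_of_ne_finset_zero (s := {(⟨a x, h⟩ : {i : Fin m → ℕ // i ≠ 0})}) ?_
      intro i hi
      rw [if_neg, mul_zero]
      intro hh
      exact hi (by simp only [Finset.mem_singleton]; exact Subtype.ext hh.symm)
  rw [UhatW, tsum_congr hsummand, Summable.tsum_finsetSum hsummable, ← Finset.sum_neg_distrib]
  refine Finset.sum_congr rfl (fun x _ => ?_)
  by_cases h : a x = 0
  · have hz : ∀ i : {i : Fin m → ℕ // i ≠ 0}, c i.1 * (if a x = i.1 then (1:ℝ) else 0) = 0 := by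
      intro i
      rw [if_neg (fun hh : a x = i.1 => i.2 (hh ▸ h)), mul_zero]
    rw [tsum_congr hz, tsum_zero, Gfun, if_pos h, neg_zero]
  · rw [tsum_eq_single (⟨a x, h⟩ : {i : Fin m → ℕ // i ≠ 0}) ?_]
    · rw [if_pos rfl, mul_one, Gfun, if_neg h]
    · intro i hi
      rw [if_neg, mul_zero]
      intro hh
      exact hi (Subtype.ext hh.symm)


lemma diff_eq_sum (r : ℝ) (t : Fin m → ℝ≥0) (ω : Idx X m → ℕ) :
    UhatW r t ω - numNew ω =
      ∑ x, Hfun r t (fun j => ω (Sum.inl (x, j))) (fun j => ω (Sum.inr (x, j))) := by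
  rw [uhatW_eq_sum, numNew_eq_sum, ← Finset.sum_sub_distrib]
  rfl

end Decomp

/-- **Variance bound (Lemma 2)**: if `t_{j₁} = max_j t_j ≥ 1`, then
`Var(Û^W − U) ≤ (∑_j n_j) e^{2r(t_{j₁}−1)} + ∑_j n_j t_j`. -/
theorem uhatW_variance_bound {X : Type*} [Fintype X] {m : ℕ}
    (p : X → Fin m → ℝ≥0) (hp : ∀ j, ∑ x, p x j = 1)
    (n : Fin m → ℝ≥0) (hn : ∀ j, 0 < n j) (t : Fin m → ℝ≥0)
    (j₁ : Fin m) (hmax : ∀ j, t j ≤ t j₁) (h1 : 1 ≤ t j₁)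
    (r : ℝ) (hr : 0 < r) :
    variance (fun ω => UhatW r t ω - numNew ω) (jointLaw X m (fun x j => n j * p x j) t)
      ≤ (∑ j, (n j : ℝ)) * Real.exp (2 * r * ((t j₁ : ℝ) - 1))
          + ∑ j, (n j : ℝ) * (t j : ℝ) := by
  classical
  set lam : X → Fin m → ℝ≥0 := fun x j => n j * p x j with hlam
  set μ : Measure (Idx X m → ℕ) := jointLaw X m lam t with hμ
  set K2 : ℝ := Real.exp (2 * r * ((t j₁ : ℝ) - 1)) with hK2
  set g : X → (Idx X m → ℕ) → ℝ := fun x ω =>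
    Hfun r t (fun j => ω (Sum.inl (x, j))) (fun j => ω (Sum.inr (x, j))) with hg
  have hfun : (fun ω : Idx X m → ℕ => UhatW r t ω - numNew ω) = ∑ x, g x := by
    funext ω
    rw [diff_eq_sum r t ω, Finset.sum_apply]
  have hmemlp : ∀ x : X, MemLp (g x) 2 μ := by
    intro x
    refine MemLp.of_bound ((measurable_of_countable _).aestronglyMeasurable)
      (Real.exp (r * ((t j₁ : ℝ) - 1)) + 1) (ae_of_all _ fun ω => ?_)
    rw [Real.norm_eq_abs]
    exact abs_Hfun_le r hr.le t j₁ hmax h1 _ _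
  have hpair : Set.Pairwise ↑(Finset.univ : Finset X)
      (fun x y => IndepFun (g x) (g y) μ) := by
    intro x _ y _ hxy
    exact indep_blocks lam t hxy (Hfun r t) (Hfun r t)
  rw [hfun, IndepFun.variance_sum (fun x _ => hmemlp x) hpair]
  -- per-element bound
  have hxbound : ∀ x : X, variance (g x) μ ≤
      K2 * (∑ j, ((lam x j : ℝ))) + ∑ j, (t j : ℝ) * (lam x j : ℝ) := by
    intro x
    set A : Set (Idx X m → ℕ) :=
      ⋃ j, Function.eval (Sum.inl (x, j)) ⁻¹' {k : ℕ | k ≠ 0} with hA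
    set B : Set (Idx X m → ℕ) :=
      ⋃ j, Function.eval (Sum.inr (x, j)) ⁻¹' {k : ℕ | k ≠ 0} with hB
    have hAmeas : MeasurableSet A :=
      MeasurableSet.iUnion fun j => (measurable_pi_apply _) MeasurableSet.of_discrete
    have hBmeas : MeasurableSet B :=
      MeasurableSet.iUnion fun j => (measurable_pi_apply _) MeasurableSet.of_discrete
    have hpt : ∀ ω, (g x ω) ^ 2 ≤
        K2 * A.indicator (fun _ => (1:ℝ)) ω + B.indicator (fun _ => (1:ℝ)) ω := by
      intro ω
      have h0 := Hfun_sq_le r hr.le t j₁ hmax h1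
        (fun j => ω (Sum.inl (x, j))) (fun j => ω (Sum.inr (x, j)))
      have hAi : (if (fun j => ω (Sum.inl (x, j))) = 0 then (0:ℝ) else 1) =
          A.indicator (fun _ => (1:ℝ)) ω := by
        rw [Set.indicator_apply]
        by_cases h : (fun j => ω (Sum.inl (x, j))) = 0
        · rw [if_pos h, if_neg]
          intro hmem
          obtain ⟨j, hj⟩ := Set.mem_iUnion.mp hmem
          exact hj (congrFun h j)
        · rw [if_neg h, if_pos]
          obtain ⟨j, hj⟩ := Function.ne_iff.mp h
          exact Set.mem_iUnion.mpr ⟨j, by simpa using hj⟩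
      have hBi : (if (fun j => ω (Sum.inr (x, j))) = 0 then (0:ℝ) else 1) =
          B.indicator (fun _ => (1:ℝ)) ω := by
        rw [Set.indicator_apply]
        by_cases h : (fun j => ω (Sum.inr (x, j))) = 0
        · rw [if_pos h, if_neg]
          intro hmem
          obtain ⟨j, hj⟩ := Set.mem_iUnion.mp hmem
          exact hj (congrFun h j)
        · rw [if_neg h, if_pos]
          obtain ⟨j, hj⟩ := Function.ne_iff.mp h
          exact Set.mem_iUnion.mpr ⟨j, by simpa using hj⟩
      rw [← hAi, ← hBi]
      exact h0
    have hint1 : Integrable (fun ω => (g x ω) ^ 2) μ := by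
      have := (hmemlp x).integrable_sq
      simpa [Pi.pow_apply] using this
    have hint2a : Integrable (fun ω => K2 * A.indicator (fun _ => (1:ℝ)) ω) μ :=
      ((integrable_const (1:ℝ)).indicator hAmeas).const_mul K2
    have hint2b : Integrable (fun ω => B.indicator (fun _ => (1:ℝ)) ω) μ :=
      (integrable_const (1:ℝ)).indicator hBmeas
    have hvar : variance (g x) μ ≤ ∫ ω, (g x ω) ^ 2 ∂μ := by
      have := variance_le_expectation_sq (X := g x) (μ := μ)
        ((measurable_of_countable _).aestronglyMeasurable)
      simpa [Pi.pow_apply] using this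
    have hle2 : ∫ ω, (g x ω) ^ 2 ∂μ ≤
        K2 * (μ A).toReal + (μ B).toReal := by
      calc ∫ ω, (g x ω) ^ 2 ∂μ
          ≤ ∫ ω, (K2 * A.indicator (fun _ => (1:ℝ)) ω + B.indicator (fun _ => (1:ℝ)) ω) ∂μ :=
            integral_mono hint1 (hint2a.add hint2b) hpt
        _ = K2 * (μ A).toReal + (μ B).toReal := by
            rw [integral_add hint2a hint2b, integral_const_mul]
            congr 1
            · congr 1
              exact integral_indicator_one hAmeas
            · exact integral_indicator_one hBmeas
    have hAle : (μ A).toReal ≤ ∑ j, ((lam x j : ℝ)) := by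
      refine le_trans (toReal_measure_iUnion_le μ _) (Finset.sum_le_sum fun j _ => ?_)
      rw [hμ, jointLaw_eval lam t (Sum.inl (x, j))]
      simpa using poisson_compl_zero_le (lam x j)
    have hBle : (μ B).toReal ≤ ∑ j, (t j : ℝ) * (lam x j : ℝ) := by
      refine le_trans (toReal_measure_iUnion_le μ _) (Finset.sum_le_sum fun j _ => ?_)
      rw [hμ, jointLaw_eval lam t (Sum.inr (x, j))]
      have := poisson_compl_zero_le (t j * lam x j)
      push_cast at this
      simpa using this
    have hK2nn : 0 ≤ K2 := Real.exp_nonneg _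
    calc variance (g x) μ ≤ ∫ ω, (g x ω) ^ 2 ∂μ := hvar
      _ ≤ K2 * (μ A).toReal + (μ B).toReal := hle2
      _ ≤ K2 * (∑ j, ((lam x j : ℝ))) + ∑ j, (t j : ℝ) * (lam x j : ℝ) :=
          add_le_add (mul_le_mul_of_nonneg_left hAle hK2nn) hBle
  refine le_trans (Finset.sum_le_sum fun x _ => hxbound x) ?_
  have hsumlam : ∀ j, ∑ x, ((lam x j : ℝ)) = (n j : ℝ) := by
    intro j
    have h2 : ∑ x, ((p x j : ℝ)) = 1 := by
      rw [← NNReal.coe_sum, hp j, NNReal.coe_one]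
    calc ∑ x, ((lam x j : ℝ)) = ∑ x, (n j : ℝ) * (p x j : ℝ) := by
          refine Finset.sum_congr rfl fun x _ => ?_
          rw [hlam]; push_cast; ring
      _ = (n j : ℝ) * ∑ x, ((p x j : ℝ)) := by rw [Finset.mul_sum]
      _ = (n j : ℝ) := by rw [h2, mul_one]
  rw [Finset.sum_add_distrib]
  have e1 : ∑ x : X, K2 * (∑ j, ((lam x j : ℝ))) = (∑ j, (n j : ℝ)) * K2 := by
    rw [← Finset.mul_sum, Finset.sum_comm]
    rw [show ∑ j, ∑ x : X, ((lam x j : ℝ)) = ∑ j, (n j : ℝ) from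
      Finset.sum_congr rfl fun j _ => hsumlam j]
    ring
  have e2 : ∑ x : X, ∑ j, (t j : ℝ) * (lam x j : ℝ) = ∑ j, (n j : ℝ) * (t j : ℝ) := by
    rw [Finset.sum_comm]
    refine Finset.sum_congr rfl fun j _ => ?_
    rw [← Finset.mul_sum, hsumlam j]
    ring
  rw [e1, e2]

end
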